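/- Let p(x) = (−t^{1+x}; t²)_∞ / (−t^{x}; t²)_∞ for t ∈ (0,1). Then p(x)·p(x+1) = 1/(1 + t^x), p is increasing in x, and p(x) → 0 as x → −∞. -/

import Mathlib

open Filter

/-- Infinite q-Pochhammer symbol `(a; q)_∞ = ∏_{k≥0} (1 - a qᵏ)`. -/
noncomputable def qPochInf (a q : ℝ) : ℝ := ∏' k : ℕ, (1 - a * q ^ k)

/-- `p(x) = (−t^{1+x}; t²)_∞ / (−t^{x}; t²)_∞`. -/
noncomputable def pFun (t x : ℝ) : ℝ :=
  qPochInf (-(t ^ (1 + x))) (t ^ 2) / qPochInf (-(t ^ x)) (t ^ 2)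

noncomputable def auxF (s c : ℝ) : ℝ := ∏' k : ℕ, (1 + c * s ^ k)

lemma aux_mult {s : ℝ} (hs0 : 0 < s) (hs1 : s < 1) {c : ℝ} (hc : 0 ≤ c) :
    Multipliable (fun k : ℕ => 1 + c * s ^ k) := by
  have hsum : Summable (fun k : ℕ => Real.log (1 + c * s ^ k)) := by
    apply Summable.of_nonneg_of_le
      (fun k => Real.log_nonneg (le_add_of_nonneg_right (by positivity))) (fun k => ?_)
      (Summable.mul_left c (summable_geometric_of_lt_one hs0.le hs1))
    have h1 : (0:ℝ) < 1 + c * s ^ k := by positivity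
    have := Real.log_le_sub_one_of_pos h1
    linarith
  exact Real.multipliable_of_summable_log (fun k => by positivity) hsum

lemma hasProd_le_real {f g : ℕ → ℝ} {a b : ℝ} (h0 : ∀ k, 0 ≤ f k) (hle : ∀ k, f k ≤ g k)
    (hf : HasProd f a) (hg : HasProd g b) : a ≤ b :=
  le_of_tendsto_of_tendsto' hf hg fun s =>
    Finset.prod_le_prod (fun i _ => h0 i) (fun i _ => hle i)

lemma aux_one_le {s : ℝ} (hs0 : 0 < s) (hs1 : s < 1) {c : ℝ} (hc : 0 ≤ c) :
    1 ≤ auxF s c := by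
  have := hasProd_le_real (f := fun _ : ℕ => (1:ℝ)) (g := fun k : ℕ => 1 + c * s ^ k)
    (fun _ => zero_le_one) (fun k => le_add_of_nonneg_right (by positivity))
    hasProd_one (aux_mult hs0 hs1 hc).hasProd
  simpa [auxF] using this

lemma aux_pos {s : ℝ} (hs0 : 0 < s) (hs1 : s < 1) {c : ℝ} (hc : 0 ≤ c) :
    0 < auxF s c := lt_of_lt_of_le one_pos (aux_one_le hs0 hs1 hc)

set_option maxHeartbeats 1000000 in
lemma aux_shift {s : ℝ} (hs0 : 0 < s) (hs1 : s < 1) {c : ℝ} (hc : 0 ≤ c) :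
    auxF s c = (1 + c) * auxF s (c * s) := by
  have h1 : Multipliable (fun k : ℕ => 1 + c * s ^ (k + 1)) := by
    have := aux_mult hs0 hs1 (mul_nonneg hc hs0.le)
    refine this.congr fun k => ?_
    ring
  rw [auxF, tprod_eq_zero_mul' h1]
  have : ∏' k : ℕ, (1 + c * s ^ (k + 1)) = auxF s (c * s) :=
    tprod_congr fun k => by rw [pow_succ']; ring
  rw [this, pow_zero, mul_one]

lemma aux_cross {s : ℝ} (hs0 : 0 < s) (hs1 : s < 1) {a b u : ℝ}
    (hb : 0 ≤ b) (hba : b ≤ a) (hu : 0 ≤ u) (hu1 : u ≤ 1) :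
    auxF s (u * a) * auxF s b ≤ auxF s (u * b) * auxF s a := by
  have ha : 0 ≤ a := hb.trans hba
  have m1 := aux_mult hs0 hs1 (mul_nonneg hu ha)
  have m2 := aux_mult hs0 hs1 hb
  have m3 := aux_mult hs0 hs1 (mul_nonneg hu hb)
  have m4 := aux_mult hs0 hs1 ha
  rw [auxF, auxF, auxF, auxF, ← m1.tprod_mul m2, ← m3.tprod_mul m4]
  refine hasProd_le_real (fun k => ?_) (fun k => ?_) (m1.mul m2).hasProd (m3.mul m4).hasProd
  · have := pow_nonneg hs0.le k
    positivity
  · have hv : 0 ≤ s ^ k := pow_nonneg hs0.le k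
    nlinarith [mul_nonneg (mul_nonneg (sub_nonneg.2 hu1) (sub_nonneg.2 hba)) hv]

lemma qPoch_eq (t x : ℝ) : qPochInf (-(t ^ x)) (t ^ 2) = auxF (t ^ 2) (t ^ x) :=
  tprod_congr fun k => by ring

/-- For `t ∈ (0,1)`: `p(x)p(x+1) = 1/(1+tˣ)`, `p` is increasing, and `p(x) → 0`
as `x → −∞`. -/
theorem pFun_properties (t : ℝ) (ht0 : 0 < t) (ht1 : t < 1) :
    (∀ x : ℝ, pFun t x * pFun t (x + 1) = 1 / (1 + t ^ x)) ∧
    Monotone (pFun t) ∧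
    Tendsto (pFun t) atBot (nhds 0) := by
  set s : ℝ := t ^ 2 with hs
  have hs0 : 0 < s := by positivity
  have hs1 : s < 1 := by nlinarith
  have hrpos : ∀ x : ℝ, 0 < t ^ x := fun x => Real.rpow_pos_of_pos ht0 x
  have hkey : ∀ x : ℝ, pFun t x = auxF s (t * t ^ x) / auxF s (t ^ x) := by
    intro x
    have h1 : t ^ (1 + x) = t * t ^ x := by
      rw [Real.rpow_add ht0, Real.rpow_one]
    rw [pFun, qPoch_eq, h1, qPoch_eq]
  have hpos : ∀ x : ℝ, 0 < pFun t x := by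
    intro x
    rw [hkey]
    exact div_pos (aux_pos hs0 hs1 (by positivity)) (aux_pos hs0 hs1 (hrpos x).le)
  have hfe : ∀ x : ℝ, pFun t x * pFun t (x + 1) = 1 / (1 + t ^ x) := by
    intro x
    have h1 : t ^ (x + 1) = t * t ^ x := by
      rw [Real.rpow_add ht0, Real.rpow_one]; ring
    have h2 : t * (t * t ^ x) = t ^ x * s := by rw [hs]; ring
    rw [hkey, hkey, h1, h2]
    have hA := aux_pos hs0 hs1 (hrpos x).le
    have hB := aux_pos hs0 hs1 (show (0:ℝ) ≤ t * t ^ x by positivity)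
    have hshift := aux_shift hs0 hs1 (hrpos x).le
    have h1c : (0:ℝ) < 1 + t ^ x := by have := hrpos x; linarith
    have hC := aux_pos hs0 hs1 (show (0:ℝ) ≤ t ^ x * s by positivity)
    rw [hshift]
    field_simp [hB.ne', hC.ne', h1c.ne']
  have hmono : Monotone (pFun t) := by
    intro x y hxy
    have hba : t ^ y ≤ t ^ x := Real.rpow_le_rpow_of_exponent_ge ht0 ht1.le hxy
    rw [hkey, hkey]
    rw [div_le_div_iff₀ (aux_pos hs0 hs1 (hrpos x).le) (aux_pos hs0 hs1 (hrpos y).le)]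
    exact aux_cross hs0 hs1 (hrpos y).le hba ht0.le ht1.le
  refine ⟨hfe, hmono, ?_⟩
  have hub : ∀ x : ℝ, pFun t x ≤ Real.sqrt (1 / (1 + t ^ x)) := by
    intro x
    have hle : pFun t x * pFun t x ≤ 1 / (1 + t ^ x) := by
      calc pFun t x * pFun t x ≤ pFun t x * pFun t (x + 1) :=
            mul_le_mul_of_nonneg_left (hmono (by linarith)) (hpos x).le
        _ = 1 / (1 + t ^ x) := hfe x
    rw [Real.le_sqrt (hpos x).le]
    · nlinarith
    · positivity
  have htop : Tendsto (fun x : ℝ => 1 + t ^ x) atBot atTop :=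
    tendsto_atTop_add_const_left _ 1 (tendsto_rpow_atBot_of_base_lt_one t ht0 ht1)
  have hinv : Tendsto (fun x : ℝ => 1 / (1 + t ^ x)) atBot (nhds 0) := by
    simpa [one_div, Pi.inv_def] using htop.inv_tendsto_atTop
  have hsq : Tendsto (fun x : ℝ => Real.sqrt (1 / (1 + t ^ x))) atBot (nhds 0) := by
    have h := (Real.continuous_sqrt.tendsto 0).comp hinv
    rw [Real.sqrt_zero] at h
    exact h
  exact tendsto_of_tendsto_of_tendsto_of_le_of_le tendsto_const_nhds hsq
    (fun x => (hpos x).le) hub
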